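/- Let W be the translation-invariant subspace determined by the subspaces (W_γ)_{γ ∈ Ĝ∖{1}}. Then W satisfies the second structural condition (i.e., W contains no nonzero function of the form v⊗a with v : G → ℝ real-valued, Σ_x v(x) = 0, v taking one common value on m−1 elements of G, and a ∈ ℂ^ℓ) if and only if ⋂_{γ ∈ Ĝ∖{1}} W_γ = {0}. -/

import Mathlib

open ENNReal NNReal

noncomputable section

namespace MartingaleModel

/-- The Fourier coefficient `f̂(γ) = ∑_{x ∈ G} γ(x)⁻¹ · f(x)` of a function
`f : G → ℂ^ℓ` at a character `γ` of the finite abelian group `G`. -/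
def fhat {G : Type*} [CommGroup G] [Fintype G] {l : ℕ}
    (f : G → EuclideanSpace ℂ (Fin l)) (γ : G →* ℂˣ) : EuclideanSpace ℂ (Fin l) :=
  ∑ x : G, (((γ x)⁻¹ : ℂˣ) : ℂ) • f x

/-- Membership in the translation-invariant space `W` determined by the subspaces
`W_γ`, `γ ∈ Ĝ \ {1}`: zero mean and `f̂(γ) ∈ W_γ` for every nontrivial character. -/
def MemWChar {G : Type*} [CommGroup G] [Fintype G] {l : ℕ}
    (Wγ : (G →* ℂˣ) → Submodule ℂ (EuclideanSpace ℂ (Fin l)))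
    (f : G → EuclideanSpace ℂ (Fin l)) : Prop :=
  (∑ x : G, f x = 0) ∧ ∀ γ : G →* ℂˣ, γ ≠ 1 → fhat f γ ∈ Wγ γ

end MartingaleModel

open MartingaleModel

lemma char_sum_zero {G : Type*} [CommGroup G] [Fintype G] (γ : G →* ℂˣ) (hγ : γ ≠ 1) :
    ∑ x : G, (((γ x)⁻¹ : ℂˣ) : ℂ) = 0 := by
  obtain ⟨y, hy⟩ : ∃ y, γ y ≠ 1 := by
    by_contra h; push_neg at h; exact hγ (MonoidHom.ext fun x => h x)
  set S := ∑ x : G, (((γ x)⁻¹ : ℂˣ) : ℂ) with hS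
  have h1 : ∑ x : G, (((γ (y * x))⁻¹ : ℂˣ) : ℂ) = S :=
    Fintype.sum_equiv (Equiv.mulLeft y) _ _ (fun x => rfl)
  have h2 : ∑ x : G, (((γ (y * x))⁻¹ : ℂˣ) : ℂ) = (((γ y)⁻¹ : ℂˣ) : ℂ) * S := by
    rw [hS, Finset.mul_sum]
    exact Finset.sum_congr rfl fun x _ => by rw [map_mul, mul_inv, Units.val_mul]
  have h3 : ((((γ y)⁻¹ : ℂˣ) : ℂ) - 1) * S = 0 := by
    rw [sub_mul, one_mul, ← h2, h1, sub_self]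
  rcases mul_eq_zero.mp h3 with h | h
  · exfalso
    apply hy
    have : ((γ y)⁻¹ : ℂˣ) = 1 := Units.ext (by simpa [sub_eq_zero] using h)
    simpa using congrArg (·⁻¹) this
  · exact h

lemma fhat_smul {G : Type*} [CommGroup G] [Fintype G] {l : ℕ}
    (v : G → ℂ) (a : EuclideanSpace ℂ (Fin l)) (γ : G →* ℂˣ) :
    fhat (fun x => v x • a) γ = (∑ x : G, (((γ x)⁻¹ : ℂˣ) : ℂ) * v x) • a := by
  rw [fhat, Finset.sum_smul]
  exact Finset.sum_congr rfl fun x _ => smul_smul _ _ _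

/-- **The second structural condition for translation-invariant `W`.** The space `W`
determined by the subspaces `(W_γ)` contains no nonzero function `v ⊗ a` with `v`
real-valued of zero mean taking one common value on `m-1` elements of `G`, and
`a ∈ ℂ^ℓ`, if and only if `⋂_{γ ≠ 1} W_γ = {0}`. -/
theorem second_structural_iff_cancelling (G : Type*) [CommGroup G] [Fintype G]
    (m l : ℕ) (hm : 3 ≤ m) (hl : 1 ≤ l) (hcard : Fintype.card G = m)
    (Wγ : (G →* ℂˣ) → Submodule ℂ (EuclideanSpace ℂ (Fin l)))
    (hWγ : ∀ γ : G →* ℂˣ, γ ≠ 1 → ∀ u ∈ Wγ γ, ∃ f, MemWChar Wγ f ∧ fhat f γ = u) :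
    (∀ (v : G → ℝ) (a : EuclideanSpace ℂ (Fin l)), (∑ x : G, v x = 0) →
        (∃ x₀ c, ∀ x : G, x ≠ x₀ → v x = c) →
        MemWChar Wγ (fun x => (v x : ℂ) • a) → (fun x : G => (v x : ℂ) • a) = 0) ↔
      (⨅ (γ : G →* ℂˣ) (_ : γ ≠ 1), Wγ γ) = ⊥ := by
  classical
  have hGne : Nonempty G := Fintype.card_pos_iff.mp (by omega)
  constructor
  · intro H
    rw [Submodule.eq_bot_iff]
    intro a ha
    rw [Submodule.mem_iInf] at ha
    obtain ⟨x₀⟩ := hGne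
    set v : G → ℝ := fun x => (if x = x₀ then (m : ℝ) else 0) - 1 with hv
    have hvsum : ∑ x : G, v x = 0 := by
      simp [hv, Finset.sum_sub_distrib, hcard]
    have hmem : MemWChar Wγ (fun x => (v x : ℂ) • a) := by
      constructor
      · have h0 : ∑ x : G, (v x : ℂ) = 0 := by
          rw [← Complex.ofReal_sum, hvsum, Complex.ofReal_zero]
        show ∑ x : G, (v x : ℂ) • a = 0
        rw [← Finset.sum_smul, h0, zero_smul]
      · intro γ hγ
        rw [fhat_smul]
        exact Submodule.smul_mem _ _ ((Submodule.mem_iInf _).mp (ha γ) hγ)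
    have hfin := H v a hvsum ⟨x₀, -1, fun x hx => by simp [hv, hx]⟩ hmem
    have := congrFun hfin x₀
    simp only [hv, if_pos rfl] at this
    have hma : (((m : ℝ) - 1 : ℝ) : ℂ) • a = 0 := this
    have hne : (((m : ℝ) - 1 : ℝ) : ℂ) ≠ 0 := by
      push_cast
      intro h
      have : (m : ℂ) = 1 := by linear_combination h
      have : (m : ℝ) = 1 := by exact_mod_cast congrArg Complex.re this
      have : m = 1 := by exact_mod_cast this
      omega
    exact (smul_eq_zero.mp hma).resolve_left hne
  · intro H v a hvsum ⟨x₀, c, hv⟩ hmem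
    by_cases hvc : v x₀ = c
    · -- v is constant, hence zero
      have hvall : ∀ x, v x = c := fun x => by
        by_cases hx : x = x₀
        · rw [hx]; exact hvc
        · exact hv x hx
      have hc0 : c = 0 := by
        have : ∑ x : G, v x = (m : ℝ) * c := by
          rw [Finset.sum_congr rfl fun x _ => hvall x]
          simp [hcard, mul_comm]
        rw [hvsum] at this
        have hm0 : (m : ℝ) ≠ 0 := by positivity
        field_simp at this
        exact (mul_eq_zero.mp this.symm).resolve_left hm0
      funext x
      simp [hvall x, hc0]
    · -- a ∈ every Wγ, hence a = 0
      have ha : a ∈ ⨅ (γ : G →* ℂˣ) (_ : γ ≠ 1), Wγ γ := by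
        rw [Submodule.mem_iInf]
        intro γ
        rw [Submodule.mem_iInf]
        intro hγ
        have hfhat := hmem.2 γ hγ
        rw [fhat_smul] at hfhat
        have hsum : (∑ x : G, (((γ x)⁻¹ : ℂˣ) : ℂ) * (v x : ℂ)) =
            (((v x₀ : ℂ) - c) * ((γ x₀)⁻¹ : ℂˣ)) := by
          have : ∀ x : G, (((γ x)⁻¹ : ℂˣ) : ℂ) * (v x : ℂ) =
              (c : ℂ) * (((γ x)⁻¹ : ℂˣ) : ℂ) +
              (if x = x₀ then ((v x₀ : ℂ) - c) * ((γ x₀)⁻¹ : ℂˣ) else 0) := by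
            intro x
            by_cases hx : x = x₀
            · subst hx; rw [if_pos rfl]; ring
            · rw [if_neg hx, hv x hx]; push_cast; ring
          rw [Finset.sum_congr rfl fun x _ => this x, Finset.sum_add_distrib,
            ← Finset.mul_sum, char_sum_zero γ hγ, mul_zero, zero_add,
            Finset.sum_ite_eq' Finset.univ x₀]
          simp
        rw [hsum] at hfhat
        have hne : (((v x₀ : ℂ) - c) * ((γ x₀)⁻¹ : ℂˣ)) ≠ 0 := by
          apply mul_ne_zero
          · intro h
            apply hvc
            have : (v x₀ : ℂ) = (c : ℂ) := by linear_combination h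
            exact_mod_cast this
          · exact Units.ne_zero _
        have := Submodule.smul_mem (Wγ γ) (((v x₀ : ℂ) - c) * ((γ x₀)⁻¹ : ℂˣ))⁻¹ hfhat
        rwa [inv_smul_smul₀ hne] at this
      rw [H] at ha
      have ha0 : a = 0 := (Submodule.mem_bot ℂ).mp ha
      funext x
      simp [ha0]
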